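/- If X is a separable Banach space and τ is an admissible topology on X, then there exists a countable norming subset S of the τ-continuous dual X*_τ, i.e., a countable set S of τ-continuous linear functionals, each of operator norm at most 1, such that ‖x‖ = sup_{Λ ∈ S} |Λx| for all x ∈ X. -/

import Mathlib

open Filter Topology MeasureTheory Finset

noncomputable section

/-- The topology σ(X, S) generated by a set S of linear functionals. -/
def sigmaTop {X : Type*} [AddCommGroup X] [Module ℝ X] (S : Set (X →ₗ[ℝ] ℝ)) :
    TopologicalSpace X :=
  ⨅ f ∈ S, TopologicalSpace.induced f inferInstance

/-- An admissible topology on a Banach space: Hausdorff, locally convex, a vector space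
topology weaker than or equal to the norm topology, with the closed unit ball closed, and
(when X is not separable) at least as strong as the weak topology. -/
def IsAdmissible (X : Type*) [NormedAddCommGroup X] [NormedSpace ℝ X]
    (τ : TopologicalSpace X) : Prop :=
  @T2Space X τ ∧ @LocallyConvexSpace ℝ X _ _ _ _ τ ∧ @IsTopologicalAddGroup X τ _ ∧
    @ContinuousSMul ℝ X _ _ τ ∧
    (inferInstance : TopologicalSpace X) ≤ τ ∧
    @IsClosed X τ (Metric.closedBall 0 1) ∧
    (¬ TopologicalSpace.SeparableSpace X →
      τ ≤ sigmaTop {f : X →ₗ[ℝ] ℝ | Continuous f})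

lemma key_functional {X : Type*} [NormedAddCommGroup X] [NormedSpace ℝ X]
    (τ : TopologicalSpace X) (hτ : IsAdmissible X τ) (d : X) (q : ℝ)
    (hq : 0 < q) (hqd : q < ‖d‖) :
    ∃ g : X →ₗ[ℝ] ℝ, @Continuous X ℝ τ _ g ∧ (∀ x, ‖g x‖ ≤ ‖x‖) ∧ q < g d := by
  obtain ⟨ht2, hlcs, hgrp, hsmul, hle, hball, -⟩ := hτ
  -- the ball of radius q is τ-closed
  have hBclosed : @IsClosed X τ (Metric.closedBall 0 q) := by
    have hsm : @Continuous (ℝ × X) X (@instTopologicalSpaceProd ℝ X _ τ) τ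
        (fun p => p.1 • p.2) := @continuous_smul ℝ X _ _ τ hsmul
    have hpm : @Continuous X (ℝ × X) τ (@instTopologicalSpaceProd ℝ X _ τ)
        (fun x => (q⁻¹, x)) :=
      @Continuous.prodMk ℝ X X _ τ τ _ _ (@continuous_const X ℝ τ _ _) (@continuous_id X τ)
    have hcont : @Continuous X X τ τ (fun x => q⁻¹ • x) :=
      @Continuous.comp X (ℝ × X) X τ (@instTopologicalSpaceProd ℝ X _ τ) τ _ _ hsm hpm
    have : Metric.closedBall (0:X) q = (fun x => q⁻¹ • x) ⁻¹' Metric.closedBall 0 1 := by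
      ext x
      simp only [Set.mem_preimage, Metric.mem_closedBall, dist_zero_right, norm_smul,
        norm_inv, Real.norm_eq_abs, abs_of_pos hq]
      rw [inv_mul_le_iff₀ hq, mul_one]
    rw [this]
    exact hball.preimage hcont
  have hBconv : Convex ℝ (Metric.closedBall (0:X) q) := convex_closedBall 0 q
  have hd : d ∉ Metric.closedBall (0:X) q := by
    simp [Metric.mem_closedBall, dist_zero_right]; linarith
  obtain ⟨f, u, h1, h2⟩ :=
    @geometric_hahn_banach_closed_point X τ _ _ _ d hgrp hsmul hlcs hBconv hBclosed hd
  have hu0 : 0 < u := by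
    have := h1 0 (by simp [hq.le])
    simpa using this
  -- bound: ∀ x, q * ‖f x‖ ≤ u * ‖x‖
  have hbound : ∀ x : X, q * ‖f x‖ ≤ u * ‖x‖ := by
    intro x
    rcases eq_or_ne x 0 with rfl | hx
    · simp
    · have hnx : 0 < ‖x‖ := norm_pos_iff.mpr hx
      have hmem : (q / ‖x‖) • x ∈ Metric.closedBall (0:X) q := by
        rw [Metric.mem_closedBall, dist_zero_right, norm_smul, Real.norm_eq_abs,
          abs_of_pos (div_pos hq hnx), div_mul_cancel₀ _ hnx.ne']
      have hmem' : -((q / ‖x‖) • x) ∈ Metric.closedBall (0:X) q := by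
        simpa using hmem
      have e1 := h1 _ hmem
      have e2 := h1 _ hmem'
      rw [map_neg] at e2
      rw [ContinuousLinearMap.map_smul] at e1 e2
      simp only [smul_eq_mul] at e1 e2
      have habs : (q / ‖x‖) * ‖f x‖ ≤ u := by
        rcases abs_cases (f x) with ⟨h, _⟩ | ⟨h, _⟩ <;>
          [skip; skip] <;> rw [Real.norm_eq_abs, h] <;> nlinarith [div_pos hq hnx]
      calc q * ‖f x‖ = ((q / ‖x‖) * ‖f x‖) * ‖x‖ := by field_simp
        _ ≤ u * ‖x‖ := by nlinarith
  refine ⟨(q / u) • (f : X →ₗ[ℝ] ℝ), ?_, ?_, ?_⟩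
  · have hfc : @Continuous X ℝ τ _ f := f.cont
    have := @Continuous.const_smul ℝ ℝ X _ _ _ τ (fun x => f x) hfc (q / u)
    exact this
  · intro x
    simp only [LinearMap.smul_apply, LinearMap.coe_coe, smul_eq_mul, norm_mul,
      Real.norm_eq_abs, abs_of_pos (div_pos hq hu0)]
    rw [div_mul_eq_mul_div, div_le_iff₀ hu0]
    calc q * ‖f x‖ ≤ u * ‖x‖ := hbound x
      _ = ‖x‖ * u := mul_comm _ _
  · simp only [LinearMap.smul_apply, LinearMap.coe_coe, smul_eq_mul]
    rw [div_mul_eq_mul_div, lt_div_iff₀ hu0]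
    exact mul_lt_mul_of_pos_left h2 hq

/-- a separable Banach space with an admissible topology τ admits a countable
norming set of τ-continuous functionals of operator norm at most 1. -/
theorem exists_countable_norming (X : Type*) [NormedAddCommGroup X] [NormedSpace ℝ X]
    [CompleteSpace X] [TopologicalSpace.SeparableSpace X]
    (τ : TopologicalSpace X) (hτ : IsAdmissible X τ) :
    ∃ S : Set (X →ₗ[ℝ] ℝ), S.Countable ∧
      (∀ f ∈ S, @Continuous X ℝ τ _ f) ∧
      (∀ f ∈ S, ∀ x : X, ‖f x‖ ≤ ‖x‖) ∧
      (∀ x : X, ‖x‖ = ⨆ f : S, ‖(f : X →ₗ[ℝ] ℝ) x‖) := by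
  obtain ⟨D, hDc, hDd⟩ :=
    @TopologicalSpace.exists_countable_dense X UniformSpace.toTopologicalSpace ‹_›
  classical
  set G : X × ℚ → (X →ₗ[ℝ] ℝ) := fun p =>
    if h : 0 < (p.2 : ℝ) ∧ (p.2 : ℝ) < ‖p.1‖ then
      (key_functional τ hτ p.1 (p.2 : ℝ) h.1 h.2).choose
    else 0 with hG
  have hGprop : ∀ p : X × ℚ,
      @Continuous X ℝ τ _ (G p) ∧ (∀ x, ‖G p x‖ ≤ ‖x‖) := by
    intro p
    rw [hG]
    dsimp only
    split_ifs with h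
    · exact ⟨(key_functional τ hτ p.1 (p.2 : ℝ) h.1 h.2).choose_spec.1,
        (key_functional τ hτ p.1 (p.2 : ℝ) h.1 h.2).choose_spec.2.1⟩
    · constructor
      · exact (@continuous_const X ℝ τ _ (0:ℝ))
      · intro x; simp
  refine ⟨G '' (D ×ˢ Set.univ), (hDc.prod Set.countable_univ).image G, ?_, ?_, ?_⟩
  · rintro f ⟨p, -, rfl⟩; exact (hGprop p).1
  · rintro f ⟨p, -, rfl⟩; exact (hGprop p).2
  · intro x
    have hne : (G '' (D ×ˢ Set.univ)).Nonempty := by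
      obtain ⟨d, hd⟩ := @Dense.nonempty X UniformSpace.toTopologicalSpace D ⟨0⟩ hDd
      exact ⟨G (d, 0), Set.mem_image_of_mem _ (by simp [hd])⟩
    have : Nonempty ↥(G '' (D ×ˢ Set.univ)) := hne.to_subtype
    have hbdd : BddAbove (Set.range fun f : ↥(G '' (D ×ˢ Set.univ)) =>
        ‖(f : X →ₗ[ℝ] ℝ) x‖) := by
      refine ⟨‖x‖, ?_⟩
      rintro r ⟨⟨f, ⟨p, -, rfl⟩⟩, rfl⟩
      exact (hGprop p).2 x
    refine le_antisymm ?_ (ciSup_le ?_)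
    · refine le_of_forall_pos_le_add ?_
      intro ε hε
      rcases le_or_gt ‖x‖ ε with hxe | hxe
      · obtain ⟨f⟩ := ‹Nonempty ↥(G '' (D ×ˢ Set.univ))›
        have h0 : (0:ℝ) ≤ ⨆ f : ↥(G '' (D ×ˢ Set.univ)), ‖(f : X →ₗ[ℝ] ℝ) x‖ :=
          le_trans (norm_nonneg _) (le_ciSup hbdd f)
        linarith
      · obtain ⟨d, hdD, hdx⟩ := hDd.exists_dist_lt x (show (0:ℝ) < ε/3 by linarith)
        have hdx' : ‖d - x‖ < ε/3 := by
          rw [← dist_eq_norm, dist_comm]; exact hdx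
        have hdn : ‖x‖ - ε/3 < ‖d‖ := by
          have h := abs_le.mp (abs_norm_sub_norm_le d x)
          rw [← dist_eq_norm, dist_comm] at h
          linarith [h.1]
        obtain ⟨q, hq1, hq2⟩ := exists_rat_btwn (show ‖x‖ - 2*ε/3 < ‖d‖ by linarith)
        have hq0 : 0 < (q:ℝ) := by linarith
        have hcond : 0 < (q:ℝ) ∧ (q:ℝ) < ‖d‖ := ⟨hq0, hq2⟩
        have hGval : (q:ℝ) < G (d, q) d := by
          rw [hG]; dsimp only; rw [dif_pos hcond]
          exact (key_functional τ hτ d (q:ℝ) hcond.1 hcond.2).choose_spec.2.2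
        have hmem : G (d, q) ∈ G '' (D ×ˢ Set.univ) :=
          Set.mem_image_of_mem _ (by simp [hdD])
        have hGx : ‖x‖ - ε < G (d, q) x := by
          have h1 : ‖G (d, q) (d - x)‖ ≤ ‖d - x‖ := (hGprop (d, q)).2 _
          have h2 : G (d, q) d - G (d, q) x = G (d, q) (d - x) := (map_sub _ _ _).symm
          have h3 : G (d, q) d - G (d, q) x ≤ ‖d - x‖ := by
            rw [h2]
            exact le_trans (le_abs_self _) h1
          linarith
        have hle2 : ‖G (d, q) x‖ ≤ ⨆ f : ↥(G '' (D ×ˢ Set.univ)), ‖(f : X →ₗ[ℝ] ℝ) x‖ :=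
          le_ciSup hbdd ⟨G (d, q), hmem⟩
        have : ‖x‖ - ε < ‖G (d, q) x‖ := lt_of_lt_of_le hGx (le_abs_self _)
        linarith
    · rintro ⟨f, ⟨p, -, rfl⟩⟩
      exact (hGprop p).2 x
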